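/- Let M be a smooth hypersurface in ℝ⁴ with second fundamental form h (with respect to unit normal ν) and induced metric g, whose principal curvatures lie in Γ₂ at every point. In an orthonormal tangent frame where h is diagonal with entries λ₁, λ₂, λ₃, the matrix G_{ij} := g_{ij} + Σ_k h_i^k h_{kj} (the induced metric of the Gauss map graph X ↦ (X, ν) into ℝ⁴×ℝ⁴) is positive definite and its inverse is G^{ij} = σ₂^{ij}/(σ₁ − σ₃), where σ₂^{ij} is the derivative matrix of σ₂ at h and σ₁, σ₃ are the first and third elementary symmetric functions of (λ₁, λ₂, λ₃). -/

import Mathlib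

/-- For a hypersurface in ℝ⁴ whose second fundamental form is, in an
orthonormal tangent frame (so g = δ), the diagonal matrix h = diag(λ₁,λ₂,λ₃) with
principal curvatures λ ∈ Γ₂ satisfying the scalar curvature equation σ₂(λ) = 1,
the induced metric G = g + h·h of the Gauss map graph X ↦ (X, ν) ⊂ ℝ⁴×ℝ⁴ is
positive definite and its inverse is G^{ij} = σ₂^{ij}/(σ₁ − σ₃), where
σ₂^{ij} = σ₁δ_{ij} − h_{ij}. -/
theorem gauss_map_graph_metric (l : Fin 3 → ℝ)
    (h1 : 0 < l 0 + l 1 + l 2)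
    (h2 : 0 < l 0 * l 1 + l 0 * l 2 + l 1 * l 2)
    (heq : l 0 * l 1 + l 0 * l 2 + l 1 * l 2 = 1) :
    ((1 : Matrix (Fin 3) (Fin 3) ℝ) + Matrix.diagonal l * Matrix.diagonal l).PosDef ∧
    ∀ i j : Fin 3,
      ((1 : Matrix (Fin 3) (Fin 3) ℝ) + Matrix.diagonal l * Matrix.diagonal l)⁻¹ i j =
        ((l 0 + l 1 + l 2) * (if i = j then 1 else 0) - Matrix.diagonal l i j) /
          ((l 0 + l 1 + l 2) - l 0 * l 1 * l 2) := by
  have key0 : (1 + l 0 ^ 2) * (l 1 + l 2) = (l 0 + l 1 + l 2) - l 0 * l 1 * l 2 := by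
    linear_combination (l 0) * heq
  have key1 : (1 + l 1 ^ 2) * (l 0 + l 2) = (l 0 + l 1 + l 2) - l 0 * l 1 * l 2 := by
    linear_combination (l 1) * heq
  have key2 : (1 + l 2 ^ 2) * (l 0 + l 1) = (l 0 + l 1 + l 2) - l 0 * l 1 * l 2 := by
    linear_combination (l 2) * heq
  have hne : (l 0 + l 1 + l 2) - l 0 * l 1 * l 2 ≠ 0 := by
    intro h
    have p0 : (0:ℝ) < 1 + l 0 ^ 2 := by positivity
    have p1 : (0:ℝ) < 1 + l 1 ^ 2 := by positivity
    have p2 : (0:ℝ) < 1 + l 2 ^ 2 := by positivity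
    have e0 : l 1 + l 2 = 0 := by
      have := key0.trans h
      exact (mul_eq_zero.mp this).resolve_left p0.ne'
    have e1 : l 0 + l 2 = 0 := by
      have := key1.trans h
      exact (mul_eq_zero.mp this).resolve_left p1.ne'
    have e2 : l 0 + l 1 = 0 := by
      have := key2.trans h
      exact (mul_eq_zero.mp this).resolve_left p2.ne'
    linarith
  have hG : (1 : Matrix (Fin 3) (Fin 3) ℝ) + Matrix.diagonal l * Matrix.diagonal l =
      Matrix.diagonal (fun i => 1 + l i * l i) := by
    rw [Matrix.diagonal_mul_diagonal, ← Matrix.diagonal_one, ← Matrix.diagonal_add]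
  constructor
  · rw [hG]
    apply Matrix.PosDef.diagonal
    intro i
    nlinarith [sq_nonneg (l i)]
  · set M : Matrix (Fin 3) (Fin 3) ℝ := fun i j =>
      ((l 0 + l 1 + l 2) * (if i = j then 1 else 0) - Matrix.diagonal l i j) /
        ((l 0 + l 1 + l 2) - l 0 * l 1 * l 2) with hM
    have hinv : ((1 : Matrix (Fin 3) (Fin 3) ℝ) + Matrix.diagonal l * Matrix.diagonal l)⁻¹ = M := by
      apply Matrix.inv_eq_right_inv
      rw [hG]
      ext i j
      rw [Matrix.diagonal_mul]
      fin_cases i <;> fin_cases j <;>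
        simp [hM, Matrix.mul_apply, Fin.sum_univ_three, Matrix.diagonal, Matrix.one_apply] <;>
        rw [← mul_div_assoc, div_eq_one_iff_eq hne] <;>
        first
          | linear_combination (l 0) * heq
          | linear_combination (l 1) * heq
          | linear_combination (l 2) * heq
    intro i j
    rw [hinv]
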